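/- A sequentially consistent window stream of size k solves consensus among k processes: let W_k be the window stream ADT of size k and H a distributed history whose event set consists of exactly 2k events distributed over k processes p_1, …, p_k, where process p_i performs the write event labelled w(v_i)/⊥ followed (in program order) by a read event labelled r/q_i, with every written value v_i ≥ 1. If H is sequentially consistent with W_k, then there exists an index j ∈ {1, …, k} such that, for every i, the first nonzero component of the tuple q_i ∈ ℕ^k equals v_j; in particular all processes obtain the same value, and this value was written by some process. -/

import Mathlib

/-- An abstract data type: initial state, transition function and output function. -/
structure ADT (Si So Q : Type) where
  q0 : Q
  tr : Q → Si → Q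
  out : Q → Si → So

/-- An input symbol is an update if it changes some state. -/
def IsUpdate {Si So Q : Type} (T : ADT Si So Q) (i : Si) : Prop :=
  ∃ q, T.tr q i ≠ q

/-- An input symbol is a query if its output depends on the state. -/
def IsQuery {Si So Q : Type} (T : ADT Si So Q) (i : Si) : Prop :=
  ∃ q q', T.out q i ≠ T.out q' i

/-- A distributed history: a set of events, labelled by an input symbol together with
an optional output (`none` encodes a hidden operation), and a program order. -/
structure History (E Si So : Type) where
  evts : Set E
  lbl : E → Si × Option So
  po : E → E → Prop

/-- Well-formedness: the program order is a partial order on the events,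
in which every event has a finite past. -/
def IsHistory {E Si So : Type} (H : History E Si So) : Prop :=
  (∀ a ∈ H.evts, H.po a a) ∧
  (∀ a ∈ H.evts, ∀ b ∈ H.evts, H.po a b → H.po b a → a = b) ∧
  (∀ a ∈ H.evts, ∀ b ∈ H.evts, ∀ c ∈ H.evts, H.po a b → H.po b c → H.po a c) ∧
  (∀ e ∈ H.evts, {e' ∈ H.evts | H.po e' e}.Finite)

open Classical in
/-- Projection H.π(E', E''): keep only the events of E', and hide the outputs of the
events that are not in E''. -/
noncomputable def History.proj {E Si So : Type} (H : History E Si So)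
    (E' E'' : Set E) : History E Si So where
  evts := E'
  lbl := fun e => if e ∈ E'' then H.lbl e else ((H.lbl e).1, none)
  po := H.po

/-- H^→ : the same history with the program order replaced by another order. -/
def History.withOrder {E Si So : Type} (H : History E Si So)
    (r : E → E → Prop) : History E Si So where
  evts := H.evts
  lbl := H.lbl
  po := r

/-- A causal order on a history: a partial order on its events containing the program
order, such that every event is in the causal past of all but finitely many events. -/
def IsCausalOrder {E Si So : Type} (H : History E Si So) (r : E → E → Prop) : Prop :=
  (∀ a ∈ H.evts, r a a) ∧
  (∀ a ∈ H.evts, ∀ b ∈ H.evts, r a b → r b a → a = b) ∧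
  (∀ a ∈ H.evts, ∀ b ∈ H.evts, ∀ c ∈ H.evts, r a b → r b c → r a c) ∧
  (∀ a ∈ H.evts, ∀ b ∈ H.evts, H.po a b → r a b) ∧
  (∀ e ∈ H.evts, {e' ∈ H.evts | ¬ r e e'}.Finite)

/-- ⌊e⌋ : the causal past of e with respect to the order r. -/
def causalPast {E Si So : Type} (H : History E Si So)
    (r : E → E → Prop) (e : E) : Set E :=
  {e' ∈ H.evts | r e' e}

/-- lin(H) ∩ L(T) ≠ ∅ : there is a linearization of the events of H, compatible with
the order of H, that is a sequential history admissible for T.  The linearization is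
given by an enumeration `s` of the events of H on an initial segment of ℕ, and
admissibility by a run (inputs `inp` and states `q`) of the transition system of T:
at each enumerated position, the input symbol of the label must match, and the
output, when it is not hidden, must match the output function of T. -/
def LinAdm {E Si So Q : Type} (T : ADT Si So Q) (H : History E Si So) : Prop :=
  ∃ s : ℕ → Option E,
    (∀ n, s n = none → s (n + 1) = none) ∧
    (∀ m n a, s m = some a → s n = some a → m = n) ∧
    (∀ a, a ∈ H.evts ↔ ∃ n, s n = some a) ∧
    (∀ m n a b, m < n → s m = some a → s n = some b → ¬ H.po b a) ∧
    ∃ inp : ℕ → Si, ∃ q : ℕ → Q,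
      q 0 = T.q0 ∧
      (∀ n, q (n + 1) = T.tr (q n) (inp n)) ∧
      ∀ n e, s n = some e →
        (H.lbl e).1 = inp n ∧
        ((H.lbl e).2 = none ∨ (H.lbl e).2 = some (T.out (q n) (inp n)))

/-- A process of a history: a maximal chain of the program order. -/
def IsProcess {E Si So : Type} (H : History E Si So) (p : Set E) : Prop :=
  p ⊆ H.evts ∧
  (∀ a ∈ p, ∀ b ∈ p, H.po a b ∨ H.po b a) ∧
  (∀ p' : Set E, p ⊆ p' → p' ⊆ H.evts →
    (∀ a ∈ p', ∀ b ∈ p', H.po a b ∨ H.po b a) → p' = p)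

/-- Sequential consistency. -/
def SC {E Si So Q : Type} (T : ADT Si So Q) (H : History E Si So) : Prop :=
  LinAdm T H

/-- Pipelined consistency. -/
def PC {E Si So Q : Type} (T : ADT Si So Q) (H : History E Si So) : Prop :=
  ∀ p, IsProcess H p → LinAdm T (H.proj H.evts p)

/-- Weak causal consistency. -/
def WCC {E Si So Q : Type} (T : ADT Si So Q) (H : History E Si So) : Prop :=
  ∃ r, IsCausalOrder H r ∧
    ∀ e ∈ H.evts, LinAdm T ((H.withOrder r).proj (causalPast H r e) {e})

/-- Causal consistency. -/
def CC {E Si So Q : Type} (T : ADT Si So Q) (H : History E Si So) : Prop :=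
  ∃ r, IsCausalOrder H r ∧
    ∀ p, IsProcess H p → ∀ e ∈ p,
      LinAdm T ((H.withOrder r).proj (causalPast H r e) p)

/-- Causal convergence. -/
def CCv {E Si So Q : Type} (T : ADT Si So Q) (H : History E Si So) : Prop :=
  ∃ r le, IsCausalOrder H r ∧
    (∀ a ∈ H.evts, ∀ b ∈ H.evts, r a b → le a b) ∧
    (∀ a ∈ H.evts, le a a) ∧
    (∀ a ∈ H.evts, ∀ b ∈ H.evts, le a b → le b a → a = b) ∧
    (∀ a ∈ H.evts, ∀ b ∈ H.evts, ∀ c ∈ H.evts, le a b → le b c → le a c) ∧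
    (∀ a ∈ H.evts, ∀ b ∈ H.evts, le a b ∨ le b a) ∧
    ∀ e ∈ H.evts, LinAdm T ((H.withOrder le).proj (causalPast H r e) {e})

/-- Operations of the window stream ADT. -/
inductive WOp : Type
  | read
  | write (v : ℕ)

/-- The integer window stream ADT of size k.
Outputs: `some q` is the k-tuple q, `none` is ⊥. -/
def WStream (k : ℕ) : ADT WOp (Option (Fin k → ℕ)) (Fin k → ℕ) where
  q0 := fun _ => 0
  tr := fun q op => match op with
    | .read => q
    | .write v => fun i => if h : (i : ℕ) + 1 < k then q ⟨(i : ℕ) + 1, h⟩ else v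
  out := fun q op => match op with
    | .read => some q
    | .write _ => none


/-- Number of writes linearized strictly before position n. -/
def wcount {k : ℕ} (pw : Fin k → ℕ) (n : ℕ) : ℕ :=
  (Finset.univ.filter fun j => pw j < n).card

/-- a sequentially consistent window stream of size k solves consensus
among k processes: each process i writes v i ≥ 1 and then reads a k-tuple q i; if the
history is sequentially consistent with W_k, then there is a j such that the first
nonzero component of every q i equals v j. -/
theorem window_stream_consensus
    {E : Type} [Countable E] (k : ℕ) (hk : 0 < k)
    (w rd : Fin k → E) (v : Fin k → ℕ) (q : Fin k → Fin k → ℕ)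
    (hw : Function.Injective w) (hrd : Function.Injective rd)
    (hwrd : ∀ i j, w i ≠ rd j)
    (hv : ∀ i, 1 ≤ v i)
    (H : History E WOp (Option (Fin k → ℕ)))
    (hevts : H.evts = Set.range w ∪ Set.range rd)
    (hlblw : ∀ i, H.lbl (w i) = (WOp.write (v i), some none))
    (hlblr : ∀ i, H.lbl (rd i) = (WOp.read, some (some (q i))))
    (hpo : ∀ a b, H.po a b ↔ ((a = b ∧ a ∈ H.evts) ∨ ∃ i, a = w i ∧ b = rd i))
    (hsc : SC (WStream k) H) :
    ∃ j : Fin k, ∀ i : Fin k, ∃ m : Fin k,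
      (∀ m' : Fin k, m' < m → q i m' = 0) ∧ q i m ≠ 0 ∧ q i m = v j := by
  obtain ⟨s, hnone, hinj, hmem, hord, inp, qs, hq0, hqs, hlbl⟩ := hsc
  have hwmem : ∀ i, w i ∈ H.evts := fun i => by rw [hevts]; exact Or.inl ⟨i, rfl⟩
  have hrmem : ∀ i, rd i ∈ H.evts := fun i => by rw [hevts]; exact Or.inr ⟨i, rfl⟩
  choose pw hpw using fun i => (hmem (w i)).1 (hwmem i)
  choose pr hpr using fun i => (hmem (rd i)).1 (hrmem i)
  have hpwinj : Function.Injective pw := by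
    intro i i' h
    have h1 := hpw i
    rw [h] at h1
    exact hw (Option.some.inj (h1.symm.trans (hpw i')))
  have hlt : ∀ i, pw i < pr i := by
    intro i
    have hne : pw i ≠ pr i := by
      intro h
      have h1 := hpw i
      rw [h] at h1
      exact hwrd i i (Option.some.inj (h1.symm.trans (hpr i)))
    have hnlt : ¬ pr i < pw i := by
      intro h
      exact hord _ _ _ _ h (hpr i) (hpw i) ((hpo (w i) (rd i)).2 (Or.inr ⟨i, rfl, rfl⟩))
    omega
  obtain ⟨j0, -, hj0⟩ := Finset.exists_min_image Finset.univ pw ⟨⟨0, hk⟩, Finset.mem_univ _⟩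
  have key : ∀ n, (∀ m, m < n → s m ≠ none) →
      (∀ m : Fin k, (m : ℕ) < k - wcount pw n → qs n m = 0) ∧
      (∀ m : Fin k, (m : ℕ) = k - wcount pw n → qs n m = v j0) := by
    intro n
    induction n with
    | zero =>
      intro _
      have hc0 : wcount pw 0 = 0 := by simp [wcount]
      constructor
      · intro m _; rw [hq0]; rfl
      · intro m hm; rw [hc0] at hm; omega
    | succ n ih =>
      intro hs
      have hsn : s n ≠ none := hs n (by omega)
      obtain ⟨e, he⟩ := Option.ne_none_iff_exists'.mp hsn
      have hemem : e ∈ H.evts := (hmem e).2 ⟨n, he⟩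
      have ihh := ih (fun m hm => hs m (by omega))
      obtain ⟨hl1, hl2⟩ := hlbl n e he
      rw [hevts] at hemem
      rcases hemem with ⟨i, rfl⟩ | ⟨i, rfl⟩
      · -- write event
        have hpwn : pw i = n := hinj _ _ _ (hpw i) he
        have hinp : inp n = WOp.write (v i) := by rw [← hl1, hlblw]
        have hcsucc : wcount pw (n + 1) = wcount pw n + 1 := by
          have hset : (Finset.univ.filter fun j => pw j < n + 1)
              = insert i (Finset.univ.filter fun j => pw j < n) := by
            ext j
            simp only [Finset.mem_insert, Finset.mem_filter, Finset.mem_univ, true_and]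
            constructor
            · intro h
              rcases Nat.lt_succ_iff_lt_or_eq.mp h with h | h
              · exact Or.inr h
              · exact Or.inl (hpwinj (h.trans hpwn.symm))
            · rintro (rfl | h) <;> omega
          rw [wcount, hset, Finset.card_insert_of_notMem (by simp [hpwn]), wcount]
        have hck : wcount pw n + 1 ≤ k := by
          have h := Finset.card_filter_le Finset.univ (fun j => pw j < n + 1)
          rw [Finset.card_univ, Fintype.card_fin] at h
          rw [← hcsucc]
          exact h
        have hstep : qs (n + 1)
            = fun m : Fin k => if h : (m : ℕ) + 1 < k then qs n ⟨(m : ℕ) + 1, h⟩ else v i := by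
          rw [hqs, hinp]; rfl
        constructor
        · intro m hm
          rw [hcsucc] at hm
          simp only [hstep]
          rw [dif_pos (by omega : (m : ℕ) + 1 < k)]
          exact ihh.1 _ (by simp only [Fin.val_mk]; omega)
        · intro m hm
          rw [hcsucc] at hm
          simp only [hstep]
          by_cases hc : wcount pw n = 0
          · rw [dif_neg (by omega)]
            have hj0n : pw j0 = n := by
              have h1 := hj0 i (Finset.mem_univ i)
              have h2 : ¬ pw j0 < n := by
                intro hlt'
                have hmem' : j0 ∈ Finset.univ.filter fun j => pw j < n := by
                  simp [hlt']
                have := Finset.card_pos.mpr ⟨j0, hmem'⟩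
                rw [← wcount] at this
                omega
              omega
            have : j0 = i := hpwinj (by rw [hj0n, hpwn])
            rw [this]
          · rw [dif_pos (by omega)]
            exact ihh.2 _ (by simp only [Fin.val_mk]; omega)
      · -- read event
        have hinp : inp n = WOp.read := by rw [← hl1, hlblr]
        have hcsucc : wcount pw (n + 1) = wcount pw n := by
          have hnw : ∀ j, pw j ≠ n := by
            intro j hj
            have h1 := hpw j
            rw [hj] at h1
            exact hwrd j i (Option.some.inj (h1.symm.trans he))
          have hset : (Finset.univ.filter fun j => pw j < n + 1)
              = (Finset.univ.filter fun j => pw j < n) := by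
            ext j
            simp only [Finset.mem_filter, Finset.mem_univ, true_and]
            have := hnw j
            omega
          rw [wcount, hset, wcount]
        have hstep : qs (n + 1) = qs n := by rw [hqs, hinp]; rfl
        rw [hcsucc, hstep]
        exact ihh
  have hprop : ∀ m d, s m = none → s (m + d) = none := by
    intro m d hm
    induction d with
    | zero => exact hm
    | succ d ih => exact hnone _ ih
  refine ⟨j0, fun i => ?_⟩
  have hall := key (pr i) (fun m hm hm0 => by
    have h1 := hprop m (pr i - m) hm0
    rw [Nat.add_sub_cancel' (le_of_lt hm)] at h1
    rw [hpr i] at h1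
    exact Option.some_ne_none _ h1)
  have hc1 : 1 ≤ wcount pw (pr i) := by
    have hmem' : i ∈ Finset.univ.filter fun j => pw j < pr i := by simp [hlt i]
    have := Finset.card_pos.mpr ⟨i, hmem'⟩
    rw [← wcount] at this
    omega
  -- q i is the state at position pr i
  obtain ⟨hl1, hl2⟩ := hlbl (pr i) (rd i) (hpr i)
  rw [hlblr] at hl1 hl2
  simp only at hl1 hl2
  have hqeq : q i = qs (pr i) := by
    rcases hl2 with h | h
    · exact absurd h (by simp)
    · rw [← hl1] at h
      have : (WStream k).out (qs (pr i)) WOp.read = some (qs (pr i)) := rfl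
      rw [this] at h
      exact Option.some.inj (Option.some.inj h)
  refine ⟨⟨k - wcount pw (pr i), Nat.sub_lt hk hc1⟩, ?_, ?_, ?_⟩
  · intro m' hm'
    rw [hqeq]
    exact hall.1 m' (Fin.lt_def.mp hm')
  · rw [hqeq, hall.2 _ rfl]
    have := hv j0
    omega
  · rw [hqeq]
    exact hall.2 _ rfl
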